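/- Smallness of H relative to the square of Φ for small r: define, for r > 0 and w ∈ ℝ, H(r,w) := (3/2) ∫₀^w Ã(r,x)^{1/2} [ ∫₀^x Ã(r,y)^{1/2} (2 sin²(ry)/r²) dy ] dx. Then there exists r₁ > 0 such that for all r ∈ (0, r₁) and all w ∈ ℝ, |H(r,w)| ≤ (9/(8r²)) ( ∫₀^w Ã(r,x)^{1/2} dx )². -/

import Mathlib

open Real Set

/-- `Ã(r,y) = 1 + 2 sin²(ry) / r²`. -/
noncomputable def Atil (r y : ℝ) : ℝ := 1 + 2 * Real.sin (r * y) ^ 2 / r ^ 2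

/-- The auxiliary double integral
`H(r,w) = (3/2) ∫₀^w Ã(r,x)^{1/2} [∫₀^x Ã(r,y)^{1/2} (2 sin²(ry)/r²) dy] dx`. -/
noncomputable def Hfun (r w : ℝ) : ℝ :=
  (3/2) * ∫ x in (0:ℝ)..w, (Atil r x) ^ ((1:ℝ)/2) *
    ∫ y in (0:ℝ)..x, (Atil r y) ^ ((1:ℝ)/2) * (2 * Real.sin (r * y) ^ 2 / r ^ 2)

namespace SmallnessAux

/-- The square root of `Atil`. -/
noncomputable def sqA (r y : ℝ) : ℝ := Real.sqrt (Atil r y)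

/-- The integrand of `Ψ`. -/
noncomputable def Pfun (r y : ℝ) : ℝ := sqA r y * (4 * Real.sin (r * y) ^ 2 - 3)

lemma Atil_nonneg (r y : ℝ) : 0 ≤ Atil r y := by unfold Atil; positivity

lemma one_le_Atil (r y : ℝ) : 1 ≤ Atil r y := by
  unfold Atil
  have : 0 ≤ 2 * Real.sin (r * y) ^ 2 / r ^ 2 := by positivity
  linarith

lemma continuous_Atil (r : ℝ) : Continuous (Atil r) := by
  unfold Atil; fun_prop

lemma continuous_sqA (r : ℝ) : Continuous (sqA r) :=
  Real.continuous_sqrt.comp (continuous_Atil r)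

lemma continuous_Pfun (r : ℝ) : Continuous (Pfun r) := by
  unfold Pfun; exact (continuous_sqA r).mul (by fun_prop)

lemma sqA_nonneg (r y : ℝ) : 0 ≤ sqA r y := Real.sqrt_nonneg _

lemma sqA_lb (r y : ℝ) : Real.sqrt 2 * Real.sin (r * y) / r ≤ sqA r y := by
  apply Real.le_sqrt_of_sq_le
  have h2 : (Real.sqrt 2) ^ 2 = 2 := Real.sq_sqrt (by norm_num)
  unfold Atil
  rw [div_pow, mul_pow, h2]
  linarith [le_refl (2 * Real.sin (r*y) ^ 2 / r ^ 2)]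

/-- Evenness of `Atil` in `y`. -/
lemma Atil_neg (r y : ℝ) : Atil r (-y) = Atil r y := by
  unfold Atil
  rw [mul_neg, Real.sin_neg]
  ring

/-- Periodicity of `Pfun` with period `π/r`. -/
lemma Pfun_periodic (r : ℝ) (hr : 0 < r) : Function.Periodic (Pfun r) (π / r) := by
  intro y
  have h : r * (y + π / r) = r * y + π := by field_simp
  unfold Pfun sqA Atil
  rw [h, Real.sin_add_pi]
  ring_nf

/-- pointwise inequality (⋆): valid whenever `sin (r*y) ≥ 0`. -/
lemma star (r : ℝ) (hr : 0 < r) (y : ℝ) (hs : 0 ≤ Real.sin (r * y)) :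
    Pfun r y ≤
      Real.sqrt 2 * Real.sin (r * y) / r * (4 * Real.sin (r * y) ^ 2 - 3) + r / Real.sqrt 6 := by
  unfold Pfun
  set s := Real.sin (r * y) with hsdef
  have hre : 0 < r / Real.sqrt 6 := by positivity
  rcases le_or_gt (4 * s ^ 2 - 3) 0 with h | h
  · have := mul_le_mul_of_nonpos_right (sqA_lb r y) h
    linarith
  · have hs1 : s ≤ 1 := Real.sin_le_one _
    have h2 : (Real.sqrt 2) ^ 2 = 2 := Real.sq_sqrt (by norm_num)
    have h6 : (Real.sqrt 6) ^ 2 = 6 := Real.sq_sqrt (by norm_num)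
    have h6p : 0 < Real.sqrt 6 := by positivity
    have h2p : 0 < Real.sqrt 2 := by positivity
    have hub : sqA r y ≤ Real.sqrt 2 * s / r + r / Real.sqrt 6 := by
      rw [sqA, Real.sqrt_le_left (by positivity)]
      unfold Atil
      rw [← hsdef]
      have key : 1 ≤ 2 * (Real.sqrt 2 * s / r) * (r / Real.sqrt 6) := by
        have heq : 2 * (Real.sqrt 2 * s / r) * (r / Real.sqrt 6)
            = 2 * Real.sqrt 2 * s / Real.sqrt 6 := by
          field_simp
        rw [heq]
        have hsge : Real.sqrt 6 ≤ 2 * Real.sqrt 2 * s := by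
          have hsq : (Real.sqrt 6)^2 ≤ (2 * Real.sqrt 2 * s)^2 := by
            rw [h6, mul_pow, mul_pow, h2]
            nlinarith
          have hstpos : 0 ≤ 2 * Real.sqrt 2 * s := by positivity
          nlinarith [Real.sqrt_nonneg 6]
        rw [le_div_iff₀ h6p]
        linarith
      have expand : (Real.sqrt 2 * s / r + r / Real.sqrt 6) ^ 2
          = 2 * s^2 / r^2 + 2 * (Real.sqrt 2 * s / r) * (r / Real.sqrt 6) + r^2/6 := by
        have ha : (Real.sqrt 2 * s / r) ^ 2 = 2 * s^2/r^2 := by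
          rw [div_pow, mul_pow, h2]
        have h62 : (r / Real.sqrt 6) ^ 2 = r^2/6 := by
          rw [div_pow, h6]
        nlinarith [ha, h62]
      rw [expand]
      have : 0 ≤ r^2/6 := by positivity
      linarith
    calc sqA r y * (4 * s ^ 2 - 3)
        ≤ (Real.sqrt 2 * s / r + r / Real.sqrt 6) * (4 * s ^ 2 - 3) :=
          mul_le_mul_of_nonneg_right hub h.le
      _ = Real.sqrt 2 * s / r * (4 * s ^ 2 - 3) + r / Real.sqrt 6 * (4 * s^2 - 3) := by ring
      _ ≤ Real.sqrt 2 * s / r * (4 * s ^ 2 - 3) + r / Real.sqrt 6 := by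
          have : 4 * s^2 - 3 ≤ 1 := by nlinarith
          nlinarith [hre]

/-- pointwise inequality (⋆⋆): for `0 ≤ y`, `r*y ≤ π/6`. -/
lemma starstar (r : ℝ) (hr : 0 < r) (y : ℝ) (hy : 0 ≤ y) (hry : r * y ≤ π / 6) :
    Pfun r y ≤
      Real.sqrt 2 * Real.sin (r * y) / r * (4 * Real.sin (r * y) ^ 2 - 3)
        - (3 - π ^ 2 / 9) * (1 / (1 + 2 * Real.sqrt 2 * y)) := by
  unfold Pfun
  set s := Real.sin (r * y) with hsdef
  have hrys : 0 ≤ r * y := by positivity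
  have hpi : π ≤ 3.15 := by linarith [Real.pi_lt_d2]
  have hs0 : 0 ≤ s := by
    rw [hsdef]; apply Real.sin_nonneg_of_nonneg_of_le_pi hrys
    nlinarith [Real.pi_gt_three]
  have hsle : s ≤ r * y := by rw [hsdef]; exact Real.sin_le hrys
  have hsub : s ≤ π / 6 := hsle.trans hry
  have hneg : 4 * s ^ 2 - 3 ≤ π ^ 2 / 9 - 3 := by nlinarith
  have hneg' : π ^ 2 / 9 - 3 < 0 := by nlinarith
  have h2 : (Real.sqrt 2) ^ 2 = 2 := Real.sq_sqrt (by norm_num)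
  have h2p : (0:ℝ) < Real.sqrt 2 := by positivity
  set B := 1 / (1 + 2 * Real.sqrt 2 * y) with hBdef
  have hden : 0 < 1 + 2 * Real.sqrt 2 * y := by positivity
  have hBpos : 0 < B := by positivity
  have hB1 : B ≤ 1 := by
    rw [hBdef]; rw [div_le_one hden]; nlinarith
  have hBden : B * (1 + 2 * Real.sqrt 2 * y) = 1 := by
    rw [hBdef]; field_simp
  have hA_le : Real.sqrt 2 * s / r ≤ Real.sqrt 2 * y := by
    rw [div_le_iff₀ hr]
    calc Real.sqrt 2 * s ≤ Real.sqrt 2 * (r * y) := by nlinarith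
      _ = Real.sqrt 2 * y * r := by ring
  have hABpos : 0 ≤ Real.sqrt 2 * s / r + B := by positivity
  have hsq : (Real.sqrt 2 * s / r + B) ^ 2 ≤ Atil r y := by
    have hA2 : (Real.sqrt 2 * s / r) ^ 2 = 2 * s ^ 2 / r ^ 2 := by
      rw [div_pow, mul_pow, h2]
    have key : 2 * (Real.sqrt 2 * s / r) * B + B ^ 2 ≤ 1 := by
      have h1 : 2 * (Real.sqrt 2 * s / r) * B ≤ 2 * (Real.sqrt 2 * y) * B := by nlinarith
      have h2' : B ^ 2 ≤ B := by nlinarith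
      have : 2 * (Real.sqrt 2 * y) * B + B = 1 := by rw [← hBden]; ring
      linarith
    unfold Atil
    rw [← hsdef]
    nlinarith [hA2]
  have hf_ge : Real.sqrt 2 * s / r + B ≤ sqA r y := Real.le_sqrt_of_sq_le hsq
  have step1 : sqA r y * (4 * s ^ 2 - 3) ≤ (Real.sqrt 2 * s / r + B) * (4 * s ^ 2 - 3) :=
    mul_le_mul_of_nonpos_right hf_ge (by linarith)
  calc sqA r y * (4 * s ^ 2 - 3) ≤ (Real.sqrt 2 * s / r + B) * (4 * s ^ 2 - 3) := step1
    _ = Real.sqrt 2 * s / r * (4 * s ^ 2 - 3) + B * (4 * s ^ 2 - 3) := by ring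
    _ ≤ Real.sqrt 2 * s / r * (4 * s ^ 2 - 3) + B * (π ^ 2 / 9 - 3) := by nlinarith
    _ = Real.sqrt 2 * s / r * (4 * s ^ 2 - 3) - (3 - π ^ 2 / 9) * B := by ring

/-- trig identity for the main term. -/
lemma main_id (r y : ℝ) (hr : r ≠ 0) :
    Real.sqrt 2 * Real.sin (r * y) / r * (4 * Real.sin (r * y) ^ 2 - 3)
      = -(Real.sqrt 2 / r) * Real.sin (3 * (r * y)) := by
  rw [Real.sin_three_mul]
  field_simp
  ring

/-- integral of the main term. -/
lemma main_integral (r x : ℝ) (hr : 0 < r) :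
    ∫ y in (0:ℝ)..x, -(Real.sqrt 2 / r) * Real.sin (3 * (r * y))
      = Real.sqrt 2 / (3 * r ^ 2) * (Real.cos (3 * r * x) - 1) := by
  have hderiv : ∀ y ∈ Set.uIcc (0:ℝ) x,
      HasDerivAt (fun u => Real.sqrt 2 / (3 * r ^ 2) * Real.cos (3 * r * u))
        (-(Real.sqrt 2 / r) * Real.sin (3 * (r * y))) y := by
    intro y _
    have h1 : HasDerivAt (fun u : ℝ => 3 * r * u) (3 * r) y := by
      simpa using (hasDerivAt_id y).const_mul (3 * r)
    have h2 := (Real.hasDerivAt_cos (3 * r * y)).comp y h1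
    have h3 := h2.const_mul (Real.sqrt 2 / (3 * r ^ 2))
    refine h3.congr_deriv ?_
    field_simp
  have hint : IntervalIntegrable (fun y => -(Real.sqrt 2 / r) * Real.sin (3 * (r * y)))
      MeasureTheory.volume 0 x := (by fun_prop : Continuous fun y : ℝ =>
        -(Real.sqrt 2 / r) * Real.sin (3 * (r * y))).intervalIntegrable _ _
  rw [intervalIntegral.integral_eq_sub_of_hasDerivAt hderiv hint]
  simp [mul_comm]
  ring

lemma main_integral_nonpos (r x : ℝ) (hr : 0 < r) :
    ∫ y in (0:ℝ)..x, -(Real.sqrt 2 / r) * Real.sin (3 * (r * y)) ≤ 0 := by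
  rw [main_integral r x hr]
  have h1 : Real.cos (3 * r * x) ≤ 1 := Real.cos_le_one _
  have h2 : 0 ≤ Real.sqrt 2 / (3 * r ^ 2) := by positivity
  nlinarith

/-- integral of the juice term over `[0, a]`. -/
lemma juice_integral (a : ℝ) (ha : 0 ≤ a) (c : ℝ) :
    ∫ y in (0:ℝ)..a, c * (1 / (1 + 2 * Real.sqrt 2 * y))
      = c / (2 * Real.sqrt 2) * Real.log (1 + 2 * Real.sqrt 2 * a) := by
  have h2p : (0:ℝ) < Real.sqrt 2 := by positivity
  have hderiv : ∀ y ∈ Set.uIcc (0:ℝ) a,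
      HasDerivAt (fun u => c / (2 * Real.sqrt 2) * Real.log (1 + 2 * Real.sqrt 2 * u))
        (c * (1 / (1 + 2 * Real.sqrt 2 * y))) y := by
    intro y hy
    rw [Set.uIcc_of_le ha] at hy
    have hypos : 0 ≤ y := hy.1
    have hden : 0 < 1 + 2 * Real.sqrt 2 * y := by positivity
    have h1 : HasDerivAt (fun u : ℝ => 1 + 2 * Real.sqrt 2 * u) (2 * Real.sqrt 2) y := by
      simpa using ((hasDerivAt_id y).const_mul (2 * Real.sqrt 2)).const_add 1
    have h2 := (h1.log hden.ne')
    have h3 := h2.const_mul (c / (2 * Real.sqrt 2))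
    refine h3.congr_deriv ?_
    field_simp
  have hcont : ContinuousOn (fun y : ℝ => c * (1 / (1 + 2 * Real.sqrt 2 * y)))
      (Set.uIcc 0 a) := by
    apply ContinuousOn.mul continuousOn_const
    apply ContinuousOn.div continuousOn_const (by fun_prop)
    intro y hy
    rw [Set.uIcc_of_le ha] at hy
    have : 0 < 1 + 2 * Real.sqrt 2 * y := by nlinarith [hy.1, h2p]
    exact this.ne'
  rw [intervalIntegral.integral_eq_sub_of_hasDerivAt hderiv hcont.intervalIntegrable]
  simp

lemma juice_contOn (a : ℝ) (ha : 0 ≤ a) (c : ℝ) :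
    ContinuousOn (fun y : ℝ => c * (1 / (1 + 2 * Real.sqrt 2 * y))) (Set.uIcc 0 a) := by
  have h2p : (0:ℝ) < Real.sqrt 2 := by positivity
  apply ContinuousOn.mul continuousOn_const
  apply ContinuousOn.div continuousOn_const (by fun_prop)
  intro y hy
  rw [Set.uIcc_of_le ha] at hy
  have : 0 < 1 + 2 * Real.sqrt 2 * y := by nlinarith [hy.1, h2p]
  exact this.ne'

/-- numeric: lower bound on the log for small `r`. -/
lemma log_ge_three {r : ℝ} (hr0 : 0 < r) (hr : r < 1/15) :
    (3:ℝ) ≤ Real.log (1 + 2 * Real.sqrt 2 * (π / (6 * r))) := by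
  have h2 : (1.414:ℝ) ≤ Real.sqrt 2 := by
    rw [show (1.414:ℝ) = Real.sqrt (1.414^2) by rw [Real.sqrt_sq]; norm_num]
    apply Real.sqrt_le_sqrt; norm_num
  have hpi : (3.14:ℝ) ≤ π := by linarith [Real.pi_gt_d2]
  have hrpos : 0 < 6 * r := by linarith
  have harg : (22:ℝ) ≤ 2 * Real.sqrt 2 * (π / (6 * r)) := by
    have h1 : (15:ℝ) < 1 / r := by
      rw [lt_div_iff₀ hr0]; nlinarith
    have h2' : π / (6 * r) = π * (1/r) / 6 := by ring
    have h3 : (3.14:ℝ) * 15 / 6 ≤ π * (1/r) / 6 := by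
      have : (3.14:ℝ) * 15 ≤ π * (1/r) := by nlinarith
      linarith
    rw [h2']
    nlinarith
  have hden : (0:ℝ) < 1 + 2 * Real.sqrt 2 * (π / (6 * r)) := by nlinarith
  rw [Real.le_log_iff_exp_le hden]
  have hexp3 : Real.exp 3 < 20.1 := by
    have h1 : Real.exp 1 < 2.7182818286 := Real.exp_one_lt_d9
    have h3 : Real.exp 3 = Real.exp 1 * Real.exp 1 * Real.exp 1 := by
      rw [← Real.exp_add, ← Real.exp_add]; norm_num
    rw [h3]
    have he : 0 < Real.exp 1 := Real.exp_pos 1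
    nlinarith
  linarith

/-- numeric comparison. -/
lemma final_numeric : 5 * π / (6 * Real.sqrt 6) ≤ (3 - π ^ 2 / 9) / (2 * Real.sqrt 2) * 3 := by
  have h2 : (1.414:ℝ) ≤ Real.sqrt 2 ∧ Real.sqrt 2 ≤ 1.415 := by
    constructor
    · rw [show (1.414:ℝ) = Real.sqrt (1.414^2) by rw [Real.sqrt_sq]; norm_num]
      apply Real.sqrt_le_sqrt; norm_num
    · rw [show (1.415:ℝ) = Real.sqrt (1.415^2) by rw [Real.sqrt_sq]; norm_num]
      apply Real.sqrt_le_sqrt; norm_num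
  have h6 : (2.449:ℝ) ≤ Real.sqrt 6 := by
    rw [show (2.449:ℝ) = Real.sqrt (2.449^2) by rw [Real.sqrt_sq]; norm_num]
    apply Real.sqrt_le_sqrt; norm_num
  have hpi : π ≤ 3.1416 := by linarith [Real.pi_lt_d4]
  have hpi0 : (3.1415:ℝ) ≤ π := by linarith [Real.pi_gt_d4]
  have h6p : (0:ℝ) < Real.sqrt 6 := by positivity
  have h2p : (0:ℝ) < Real.sqrt 2 := by positivity
  have lhs_ub : 5 * π / (6 * Real.sqrt 6) ≤ 5 * 3.1416 / (6 * 2.449) := by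
    apply div_le_div₀ (by norm_num) (by nlinarith) (by nlinarith) (by nlinarith)
  have rhs_lb : (1.90336:ℝ) / (2 * 1.415) * 3 ≤ (3 - π ^ 2 / 9) / (2 * Real.sqrt 2) * 3 := by
    have hnum : (1.90336:ℝ) ≤ 3 - π ^ 2 / 9 := by nlinarith
    have hden : 2 * Real.sqrt 2 ≤ 2 * 1.415 := by linarith [h2.2]
    have hstep : (1.90336:ℝ) / (2 * 1.415) ≤ (3 - π ^ 2 / 9) / (2 * Real.sqrt 2) :=
      div_le_div₀ (by nlinarith) hnum (by nlinarith) hden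
    nlinarith
  calc 5 * π / (6 * Real.sqrt 6) ≤ 5 * 3.1416 / (6 * 2.449) := lhs_ub
    _ ≤ (1.90336:ℝ) / (2 * 1.415) * 3 := by norm_num
    _ ≤ (3 - π ^ 2 / 9) / (2 * Real.sqrt 2) * 3 := rhs_lb


open intervalIntegral in
/-- Core single-period estimate: `Ψ(x) ≤ 0` for `x ∈ [0, π/r]`. -/
lemma Psi_nonpos_on_period {r : ℝ} (hr0 : 0 < r) (hr : r < 1/15) {x : ℝ}
    (hx : 0 ≤ x) (hxT : x ≤ π / r) :
    (∫ y in (0:ℝ)..x, Pfun r y) ≤ 0 := by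
  have hpi3 : (3:ℝ) < π := Real.pi_gt_three
  have hpi : π ≤ 3.15 := by linarith [Real.pi_lt_d2]
  set a := π / (6 * r) with hadef
  have hapos : 0 < a := by positivity
  have hPint : ∀ u v : ℝ, IntervalIntegrable (Pfun r) MeasureTheory.volume u v :=
    fun u v => (continuous_Pfun r).intervalIntegrable u v
  by_cases hcase : x ≤ a
  · -- on [0, a] the integrand is pointwise nonpositive
    have hpt : ∀ y ∈ Set.Icc (0:ℝ) x, Pfun r y ≤ 0 := by
      intro y hy
      have hy0 : 0 ≤ y := hy.1
      have hry : r * y ≤ π / 6 := by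
        have : y ≤ a := le_trans hy.2 hcase
        rw [hadef] at this
        calc r * y ≤ r * (π / (6 * r)) := by nlinarith
          _ = π / 6 := by field_simp
      have hs_le : Real.sin (r * y) ≤ r * y := Real.sin_le (by positivity)
      have hs0 : 0 ≤ Real.sin (r * y) := by
        apply Real.sin_nonneg_of_nonneg_of_le_pi (by positivity)
        nlinarith
      have hfac : 4 * Real.sin (r * y) ^ 2 - 3 ≤ 0 := by nlinarith
      exact mul_nonpos_of_nonneg_of_nonpos (sqA_nonneg r y) hfac
    calc (∫ y in (0:ℝ)..x, Pfun r y) ≤ ∫ y in (0:ℝ)..x, (0:ℝ) :=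
          integral_mono_on hx (hPint 0 x) intervalIntegrable_const hpt
      _ = 0 := by simp
  · push_neg at hcase
    have hax : a ≤ x := hcase.le
    -- notation for the majorants
    set main : ℝ → ℝ := fun y => -(Real.sqrt 2 / r) * Real.sin (3 * (r * y)) with hmaindef
    have hmaincont : Continuous main := by rw [hmaindef]; fun_prop
    set c : ℝ := 3 - π ^ 2 / 9 with hcdef
    have hcpos : 0 < c := by rw [hcdef]; nlinarith
    set juice : ℝ → ℝ := fun y => c * (1 / (1 + 2 * Real.sqrt 2 * y)) with hjdef
    -- bound on [0, a]
    have hb1 : (∫ y in (0:ℝ)..a, Pfun r y) ≤ ∫ y in (0:ℝ)..a, (main y - juice y) := by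
      apply integral_mono_on hapos.le (hPint 0 a)
      · exact ((hmaincont.continuousOn.sub (juice_contOn a hapos.le c))).intervalIntegrable
      · intro y hy
        have hy0 : 0 ≤ y := hy.1
        have hry : r * y ≤ π / 6 := by
          have : y ≤ a := hy.2
          rw [hadef] at this
          calc r * y ≤ r * (π / (6 * r)) := by nlinarith
            _ = π / 6 := by field_simp
        have := starstar r hr0 y hy0 hry
        rw [main_id r y hr0.ne'] at this
        exact this
    have hb1' : (∫ y in (0:ℝ)..a, Pfun r y)
        ≤ (∫ y in (0:ℝ)..a, main y) - ∫ y in (0:ℝ)..a, juice y := by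
      rw [← intervalIntegral.integral_sub (hmaincont.intervalIntegrable 0 a)
        ((juice_contOn a hapos.le c).intervalIntegrable)]
      exact hb1
    -- bound on [a, x]
    have hb2 : (∫ y in a..x, Pfun r y) ≤ (∫ y in a..x, main y) + r * (x - a) / Real.sqrt 6 := by
      have hmono : (∫ y in a..x, Pfun r y) ≤ ∫ y in a..x, (main y + r / Real.sqrt 6) := by
        apply integral_mono_on hax (hPint a x)
        · exact (hmaincont.add continuous_const).intervalIntegrable a x
        · intro y hy
          have hy0 : 0 ≤ y := le_trans hapos.le hy.1
          have hs0 : 0 ≤ Real.sin (r * y) := by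
            apply Real.sin_nonneg_of_nonneg_of_le_pi (by positivity)
            calc r * y ≤ r * x := by nlinarith [hy.2]
              _ ≤ r * (π / r) := by nlinarith
              _ = π := by field_simp
          have := star r hr0 y hs0
          rw [main_id r y hr0.ne'] at this
          exact this
      rw [intervalIntegral.integral_add (hmaincont.intervalIntegrable a x)
        (intervalIntegrable_const)] at hmono
      simp only [intervalIntegral.integral_const, smul_eq_mul] at hmono
      calc (∫ y in a..x, Pfun r y) ≤ (∫ y in a..x, main y) + (x - a) * (r / Real.sqrt 6) := hmono
        _ = (∫ y in a..x, main y) + r * (x - a) / Real.sqrt 6 := by ring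
    -- combine
    have hsplit : (∫ y in (0:ℝ)..x, Pfun r y)
        = (∫ y in (0:ℝ)..a, Pfun r y) + ∫ y in a..x, Pfun r y :=
      (integral_add_adjacent_intervals (hPint 0 a) (hPint a x)).symm
    have hmainsplit : (∫ y in (0:ℝ)..a, main y) + (∫ y in a..x, main y)
        = ∫ y in (0:ℝ)..x, main y :=
      integral_add_adjacent_intervals (hmaincont.intervalIntegrable 0 a)
        (hmaincont.intervalIntegrable a x)
    have hmain_nonpos : (∫ y in (0:ℝ)..x, main y) ≤ 0 := main_integral_nonpos r x hr0
    have hjuice : (∫ y in (0:ℝ)..a, juice y)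
        = c / (2 * Real.sqrt 2) * Real.log (1 + 2 * Real.sqrt 2 * a) :=
      juice_integral a hapos.le c
    -- numeric estimates
    have hlog : (3:ℝ) ≤ Real.log (1 + 2 * Real.sqrt 2 * a) := log_ge_three hr0 hr
    have hjlb : 5 * π / (6 * Real.sqrt 6) ≤ ∫ y in (0:ℝ)..a, juice y := by
      rw [hjuice]
      have hcoef : 0 ≤ c / (2 * Real.sqrt 2) := by positivity
      calc 5 * π / (6 * Real.sqrt 6) ≤ c / (2 * Real.sqrt 2) * 3 := final_numeric
        _ ≤ c / (2 * Real.sqrt 2) * Real.log (1 + 2 * Real.sqrt 2 * a) := by nlinarith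
    have herr : r * (x - a) / Real.sqrt 6 ≤ 5 * π / (6 * Real.sqrt 6) := by
      have h6p : (0:ℝ) < Real.sqrt 6 := by positivity
      have hxa : x - a ≤ 5 * π / (6 * r) := by
        have h5 : π / r - π / (6 * r) = 5 * π / (6 * r) := by field_simp; ring
        rw [hadef]; linarith [hxT]
      have key : r * (x - a) ≤ 5 * π / 6 := by
        calc r * (x - a) ≤ r * (5 * π / (6 * r)) := by nlinarith
          _ = 5 * π / 6 := by field_simp
      calc r * (x - a) / Real.sqrt 6 ≤ (5 * π / 6) / Real.sqrt 6 :=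
            by apply div_le_div_of_nonneg_right key h6p.le
        _ = 5 * π / (6 * Real.sqrt 6) := by rw [div_div]
    linarith


/-- `Ψ(x) ≤ 0` for all `x ≥ 0`. -/
lemma Psi_nonpos {r : ℝ} (hr0 : 0 < r) (hr : r < 1/15) {x : ℝ} (hx : 0 ≤ x) :
    (∫ y in (0:ℝ)..x, Pfun r y) ≤ 0 := by
  have hT : 0 < π / r := by positivity
  have hPint : ∀ u v : ℝ, IntervalIntegrable (Pfun r) MeasureTheory.volume u v :=
    fun u v => (continuous_Pfun r).intervalIntegrable u v
  have haux : ∀ n : ℕ, ∀ z : ℝ, 0 ≤ z → z ≤ (n + 1) * (π / r) →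
      (∫ y in (0:ℝ)..z, Pfun r y) ≤ 0 := by
    intro n
    induction n with
    | zero =>
      intro z hz hzn
      exact Psi_nonpos_on_period hr0 hr hz (by linarith [hzn] : z ≤ π / r)
    | succ n ih =>
      intro z hz hzn
      by_cases hcase : z ≤ (n + 1) * (π / r)
      · exact ih z hz hcase
      · push_neg at hcase
        have hn1 : (1:ℝ) ≤ (n:ℝ) + 1 := by have : (0:ℝ) ≤ (n:ℝ) := Nat.cast_nonneg n; linarith
        have hz' : 0 ≤ z - π / r := by nlinarith
        have hz'' : z - π / r ≤ (n + 1) * (π / r) := by push_cast at hzn ⊢; nlinarith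
        have h1 : (∫ y in (0:ℝ)..(z - π / r), Pfun r y) ≤ 0 := ih _ hz' hz''
        have h2 : (∫ y in (z - π / r)..z, Pfun r y) = ∫ y in (0:ℝ)..(π / r), Pfun r y := by
          have := (Pfun_periodic r hr0).intervalIntegral_add_eq (z - π / r) 0
          simpa using this
        have h3 : (∫ y in (0:ℝ)..z, Pfun r y)
            = (∫ y in (0:ℝ)..(z - π / r), Pfun r y) + ∫ y in (z - π / r)..z, Pfun r y :=
          (intervalIntegral.integral_add_adjacent_intervals (hPint _ _) (hPint _ _)).symm
        have h4 : (∫ y in (0:ℝ)..(π / r), Pfun r y) ≤ 0 :=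
          Psi_nonpos_on_period hr0 hr hT.le le_rfl
        rw [h3, h2]
        linarith
  obtain ⟨n, hn⟩ := exists_nat_ge (x / (π / r))
  apply haux n x hx
  have : x ≤ n * (π / r) := by
    rw [div_le_iff₀ hT] at hn
    linarith
  nlinarith

/-- Step D: the weighted integral bound, `G(x) ≤ 3/(2r²) F(x)` for `x ≥ 0`. -/
lemma G_le_F {r : ℝ} (hr0 : 0 < r) (hr : r < 1/15) {x : ℝ} (hx : 0 ≤ x) :
    (∫ y in (0:ℝ)..x, sqA r y * (2 * Real.sin (r * y) ^ 2 / r ^ 2))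
      ≤ 3 / (2 * r ^ 2) * ∫ y in (0:ℝ)..x, sqA r y := by
  have hid : (fun y => sqA r y * (2 * Real.sin (r * y) ^ 2 / r ^ 2))
      = fun y => 3 / (2 * r ^ 2) * sqA r y + 1 / (2 * r ^ 2) * Pfun r y := by
    funext y
    unfold Pfun
    field_simp
    ring
  rw [hid]
  rw [intervalIntegral.integral_add (f := fun y => 3 / (2 * r ^ 2) * sqA r y)
    (g := fun y => 1 / (2 * r ^ 2) * Pfun r y)
    ((continuous_const.mul (continuous_sqA r)).intervalIntegrable _ _)
    ((continuous_const.mul (continuous_Pfun r)).intervalIntegrable _ _),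
    intervalIntegral.integral_const_mul, intervalIntegral.integral_const_mul]
  have h1 : (∫ y in (0:ℝ)..x, Pfun r y) ≤ 0 := Psi_nonpos hr0 hr hx
  have h2 : (0:ℝ) < 1 / (2 * r ^ 2) := by positivity
  nlinarith


/-- The inner integral `G`. -/
noncomputable def Gfun (r x : ℝ) : ℝ :=
  ∫ y in (0:ℝ)..x, sqA r y * (2 * Real.sin (r * y) ^ 2 / r ^ 2)

lemma integral_neg_even {g : ℝ → ℝ} (hg : ∀ y, g (-y) = g y) (x : ℝ) :
    (∫ y in (0:ℝ)..(-x), g y) = - ∫ y in (0:ℝ)..x, g y := by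
  have h : (∫ y in (0:ℝ)..x, g (-y)) = ∫ y in (-x)..(-(0:ℝ)), g y :=
    intervalIntegral.integral_comp_neg (a := 0) (b := x) (f := g)
  simp only [neg_zero] at h
  have h2 : (∫ y in (0:ℝ)..x, g (-y)) = ∫ y in (0:ℝ)..x, g y := by
    apply intervalIntegral.integral_congr
    intro y _
    exact hg y
  rw [h2] at h
  calc (∫ y in (0:ℝ)..(-x), g y) = - ∫ y in (-x)..(0:ℝ), g y := by
        rw [← intervalIntegral.integral_symm]
    _ = - ∫ y in (0:ℝ)..x, g y := by rw [← h]

lemma integral_neg_odd {g : ℝ → ℝ} (hg : ∀ y, g (-y) = - g y) (x : ℝ) :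
    (∫ y in (0:ℝ)..(-x), g y) = ∫ y in (0:ℝ)..x, g y := by
  have h : (∫ y in (0:ℝ)..x, g (-y)) = ∫ y in (-x)..(-(0:ℝ)), g y :=
    intervalIntegral.integral_comp_neg (a := 0) (b := x) (f := g)
  simp only [neg_zero] at h
  have h2 : (∫ y in (0:ℝ)..x, g (-y)) = - ∫ y in (0:ℝ)..x, g y := by
    rw [show (fun y => g (-y)) = (fun y => - g y) from funext hg]
    exact intervalIntegral.integral_neg
  rw [h2] at h
  calc (∫ y in (0:ℝ)..(-x), g y) = - ∫ y in (-x)..(0:ℝ), g y := by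
        rw [← intervalIntegral.integral_symm]
    _ = ∫ y in (0:ℝ)..x, g y := by rw [← h]; ring

lemma sqA_even (r x : ℝ) : sqA r (-x) = sqA r x := by
  unfold sqA; rw [Atil_neg]

lemma Hfun_eq (r w : ℝ) :
    Hfun r w = (3/2) * ∫ x in (0:ℝ)..w, sqA r x * Gfun r x := by
  unfold Hfun Gfun sqA
  norm_num [Real.sqrt_eq_rpow]

lemma Gfun_odd (r x : ℝ) : Gfun r (-x) = - Gfun r x := by
  unfold Gfun
  apply integral_neg_even
  intro y
  rw [sqA_even, mul_neg, Real.sin_neg]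
  ring

lemma Hfun_neg (r w : ℝ) : Hfun r (-w) = Hfun r w := by
  rw [Hfun_eq, Hfun_eq]
  congr 1
  apply integral_neg_odd
  intro x
  rw [sqA_even, Gfun_odd]
  ring

lemma Hbound_nonneg {r : ℝ} (hr0 : 0 < r) (hr : r < 1/15) {w : ℝ} (hw : 0 ≤ w) :
    |Hfun r w| ≤ (9 / (8 * r ^ 2)) * (∫ x in (0:ℝ)..w, (Atil r x) ^ ((1:ℝ)/2)) ^ 2 := by
  set F : ℝ → ℝ := fun x => ∫ y in (0:ℝ)..x, sqA r y with hFdef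
  have hsqAcont := continuous_sqA r
  have hginner : Continuous (fun y => sqA r y * (2 * Real.sin (r * y) ^ 2 / r ^ 2)) :=
    hsqAcont.mul (by fun_prop)
  have hFcont : Continuous F :=
    intervalIntegral.continuous_primitive (fun u v => hsqAcont.intervalIntegrable u v) 0
  have hGcont : Continuous (Gfun r) :=
    intervalIntegral.continuous_primitive (fun u v => hginner.intervalIntegrable u v) 0
  have hG_nonneg : ∀ x, 0 ≤ x → 0 ≤ Gfun r x := by
    intro x hx
    apply intervalIntegral.integral_nonneg hx
    intro u _
    exact mul_nonneg (sqA_nonneg r u) (by positivity)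
  have hH_nonneg : 0 ≤ ∫ x in (0:ℝ)..w, sqA r x * Gfun r x := by
    apply intervalIntegral.integral_nonneg hw
    intro x hx
    exact mul_nonneg (sqA_nonneg r x) (hG_nonneg x hx.1)
  have hstep : (∫ x in (0:ℝ)..w, sqA r x * Gfun r x)
      ≤ ∫ x in (0:ℝ)..w, 3 / (2 * r ^ 2) * (sqA r x * F x) := by
    apply intervalIntegral.integral_mono_on hw
      ((hsqAcont.mul hGcont).intervalIntegrable _ _)
      ((continuous_const.mul (hsqAcont.mul hFcont)).intervalIntegrable _ _)
    intro x hx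
    have h1 : Gfun r x ≤ 3 / (2 * r ^ 2) * F x := G_le_F hr0 hr hx.1
    have h2 := mul_le_mul_of_nonneg_left h1 (sqA_nonneg r x)
    calc sqA r x * Gfun r x ≤ sqA r x * (3 / (2 * r ^ 2) * F x) := h2
      _ = 3 / (2 * r ^ 2) * (sqA r x * F x) := by ring
  have hFTC : (∫ x in (0:ℝ)..w, sqA r x * F x) = (F w) ^ 2 / 2 := by
    have hderiv : ∀ x ∈ Set.uIcc (0:ℝ) w,
        HasDerivAt (fun u => (F u) ^ 2 / 2) (sqA r x * F x) x := by
      intro x _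
      have hF : HasDerivAt F (sqA r x) x :=
        intervalIntegral.integral_hasDerivAt_right (hsqAcont.intervalIntegrable _ _)
          (hsqAcont.stronglyMeasurableAtFilter _ _) hsqAcont.continuousAt
      have h := (hF.mul hF).div_const 2
      have heq : (fun u => (F u) ^ 2 / 2) = fun x => F x * F x / 2 := by
        funext u; ring
      rw [heq]
      refine h.congr_deriv ?_
      ring
    rw [intervalIntegral.integral_eq_sub_of_hasDerivAt hderiv
      ((hsqAcont.mul hFcont).intervalIntegrable _ _)]
    have hF0 : F 0 = 0 := intervalIntegral.integral_same
    rw [hF0]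
    ring
  have hchain : (∫ x in (0:ℝ)..w, sqA r x * Gfun r x) ≤ 3 / (2 * r ^ 2) * ((F w) ^ 2 / 2) := by
    calc (∫ x in (0:ℝ)..w, sqA r x * Gfun r x)
        ≤ ∫ x in (0:ℝ)..w, 3 / (2 * r ^ 2) * (sqA r x * F x) := hstep
      _ = 3 / (2 * r ^ 2) * ∫ x in (0:ℝ)..w, sqA r x * F x :=
          intervalIntegral.integral_const_mul _ _
      _ = 3 / (2 * r ^ 2) * ((F w) ^ 2 / 2) := by rw [hFTC]
  have hFr : (∫ x in (0:ℝ)..w, (Atil r x) ^ ((1:ℝ)/2)) = F w := by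
    rw [hFdef]
    norm_num [sqA, Real.sqrt_eq_rpow]
  rw [Hfun_eq, hFr]
  rw [abs_of_nonneg (by linarith : (0:ℝ) ≤ (3/2) * ∫ x in (0:ℝ)..w, sqA r x * Gfun r x)]
  have hfinal : (3:ℝ)/2 * (3 / (2 * r ^ 2) * ((F w) ^ 2 / 2)) = 9 / (8 * r ^ 2) * (F w) ^ 2 := by
    field_simp
    ring
  nlinarith [hchain]

end SmallnessAux

/-- Smallness of `H` relative to the square of `Φ` for small `r`. -/
theorem smallness_H_relative_Phi_sq :
    ∃ r₁ : ℝ, 0 < r₁ ∧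
      ∀ r ∈ Set.Ioo (0:ℝ) r₁, ∀ w : ℝ,
        |Hfun r w| ≤ (9 / (8 * r ^ 2)) * (∫ x in (0:ℝ)..w, (Atil r x) ^ ((1:ℝ)/2)) ^ 2 := by
  refine ⟨1/15, by norm_num, ?_⟩
  rintro r ⟨hr0, hr⟩ w
  rcases le_total 0 w with hw | hw
  · exact SmallnessAux.Hbound_nonneg hr0 hr hw
  · have h := SmallnessAux.Hbound_nonneg hr0 hr (neg_nonneg.mpr hw)
    have h1 : Hfun r (-w) = Hfun r w := SmallnessAux.Hfun_neg r w
    have h2 : (∫ x in (0:ℝ)..(-w), (Atil r x) ^ ((1:ℝ)/2))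
        = - ∫ x in (0:ℝ)..w, (Atil r x) ^ ((1:ℝ)/2) := by
      apply SmallnessAux.integral_neg_even
      intro y
      rw [SmallnessAux.Atil_neg]
    rw [h1, h2, neg_sq] at h
    exact h
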